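/- Let C be a stable ∞-category with a weight structure. Then C_{[-∞,b]} equals the full subcategory of all X ∈ C such that the mapping spectrum hom_C(X,Y) is connective for every Y ∈ C_{[b,∞]}. Dually, C_{[a,∞]} equals the full subcategory of all X such that hom_C(Y,X) is connective for every Y ∈ C_{[-∞,a]}. In particular C_{[a,∞]} is closed under pushouts, C_{[-∞,b]} is closed under pullbacks, and all C_{[a,b]} are closed under extensions. -/

import Mathlib

open CategoryTheory Limits Pretriangulated

universe v u

variable (C : Type u) [Category.{v} C] [HasZeroObject C] [HasShift C ℤ]
  [Preadditive C] [∀ n : ℤ, (CategoryTheory.shiftFunctor C n).Additive] [Pretriangulated C]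

/-- A weight structure on a stable (pretriangulated) category: two subcategories
`conn = C_{[0,∞]}` and `coconn = C_{[-∞,0]}`, closed under retracts, such that the mapping
spectrum `hom(X,Y)` is connective (i.e. `Hom(X⟦i⟧, Y) = 0` for `i < 0`) whenever
`X ∈ coconn` and `Y ∈ conn`, and every object admits a weight decomposition. -/
structure WeightStructure : Type (max u v) where
  conn : Set C
  coconn : Set C
  conn_retract : ∀ ⦃X Y : C⦄ (i : X ⟶ Y) (r : Y ⟶ X), i ≫ r = 𝟙 X → conn Y → conn X
  coconn_retract : ∀ ⦃X Y : C⦄ (i : X ⟶ Y) (r : Y ⟶ X), i ≫ r = 𝟙 X → coconn Y → coconn X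
  hom_conn : ∀ ⦃X Y : C⦄, coconn X → conn Y → ∀ i : ℤ, i < 0 → ∀ f : X⟦i⟧ ⟶ Y, f = 0
  exists_decomp : ∀ X : C, ∃ (Y Z : C) (f : Y ⟶ X) (g : X ⟶ Z) (h : Z ⟶ Y⟦(1 : ℤ)⟧),
    (Triangle.mk f g h ∈ distTriang C) ∧ coconn Y ∧ conn (Z⟦(-1 : ℤ)⟧)

namespace WeightStructure

variable {C}

/-- `X ∈ C_{[a,∞]}`, i.e. `X⟦-a⟧ ∈ C_{[0,∞]}`. -/
def memGE (W : WeightStructure C) (a : ℤ) (X : C) : Prop := W.conn (X⟦(-a)⟧)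

/-- `X ∈ C_{[-∞,b]}`, i.e. `X⟦-b⟧ ∈ C_{[-∞,0]}`. -/
def memLE (W : WeightStructure C) (b : ℤ) (X : C) : Prop := W.coconn (X⟦(-b)⟧)

end WeightStructure



section Helpers

variable {C}

lemma shift_map_zero {X Y : C} {f : X ⟶ Y} (n : ℤ)
    (h : (shiftFunctor C n).map f = 0) : f = 0 :=
  (shiftFunctor C n).map_injective (by rw [h, Functor.map_zero])

namespace WeightStructure

lemma conn_of_iso (W : WeightStructure C) {X Y : C} (e : X ≅ Y) (h : W.conn Y) : W.conn X :=
  W.conn_retract e.hom e.inv e.hom_inv_id h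

lemma coconn_of_iso (W : WeightStructure C) {X Y : C} (e : X ≅ Y) (h : W.coconn Y) :
    W.coconn X :=
  W.coconn_retract e.hom e.inv e.hom_inv_id h

/-- Basic vanishing: maps `X⟦i⟧ ⟶ Y` vanish for `i < 0`, `X ∈ C_{[-∞,n]}`, `Y ∈ C_{[n,∞]}`. -/
lemma vanish₀ (W : WeightStructure C) {n : ℤ} {X Y : C} (hX : W.memLE n X) (hY : W.memGE n Y)
    {i : ℤ} (hi : i < 0) (f : X⟦i⟧ ⟶ Y) : f = 0 := by
  have h0 : (shiftComm X i (-n)).inv ≫ (shiftFunctor C (-n)).map f = 0 :=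
    W.hom_conn hX hY i hi _
  have h1 : (shiftFunctor C (-n)).map f =
      (shiftComm X i (-n)).hom ≫ ((shiftComm X i (-n)).inv ≫ (shiftFunctor C (-n)).map f) := by
    simp
  rw [h0, comp_zero] at h1
  exact shift_map_zero (-n) h1

/-- Vanishing for doubly-shifted sources. -/
lemma vanish' (W : WeightStructure C) {n : ℤ} {X Y : C} (hX : W.memLE n X) (hY : W.memGE n Y)
    {i j : ℤ} (hij : i + j < 0) (f : X⟦i⟧⟦j⟧ ⟶ Y) : f = 0 := by
  have h0 : ((shiftFunctorAdd' C i j (i + j) rfl).app X).hom ≫ f = 0 :=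
    W.vanish₀ hX hY hij _
  have h1 : f = ((shiftFunctorAdd' C i j (i + j) rfl).app X).inv ≫
      (((shiftFunctorAdd' C i j (i + j) rfl).app X).hom ≫ f) := by simp
  rw [h0, comp_zero] at h1
  exact h1

/-- Vanishing for maps `X⟦i⟧ ⟶ Y⟦j⟧` when `i < j`. -/
lemma vanish₂ (W : WeightStructure C) {n : ℤ} {X Y : C} (hX : W.memLE n X) (hY : W.memGE n Y)
    {i j : ℤ} (hij : i < j) (f : X⟦i⟧ ⟶ Y⟦j⟧) : f = 0 := by
  have h0 : (shiftFunctor C (-j)).map f ≫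
      ((shiftFunctorCompIsoId C j (-j) (add_neg_cancel j)).app Y).hom = 0 :=
    W.vanish' hX hY (by omega) _
  have h1 : (shiftFunctor C (-j)).map f = ((shiftFunctor C (-j)).map f ≫
      ((shiftFunctorCompIsoId C j (-j) (add_neg_cancel j)).app Y).hom) ≫
      ((shiftFunctorCompIsoId C j (-j) (add_neg_cancel j)).app Y).inv := by simp
  rw [h0, zero_comp] at h1
  exact shift_map_zero (-j) h1

/-- The converse: vanishing of all maps to `C_{[b,∞]}` forces membership in `C_{[-∞,b]}`. -/
lemma memLE_of (W : WeightStructure C) (b : ℤ) (X : C)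
    (h : ∀ Y : C, W.memGE b Y → ∀ i : ℤ, i < 0 → ∀ f : X⟦i⟧ ⟶ Y, f = 0) :
    W.memLE b X := by
  obtain ⟨K, Q, f, g, h3, hT, hK, hQ⟩ := W.exists_decomp (X⟦(-b)⟧)
  have hY₀ : W.memGE b (Q⟦(-1 : ℤ)⟧⟦b⟧) :=
    W.conn_of_iso ((shiftFunctorCompIsoId C b (-b) (add_neg_cancel b)).app (Q⟦(-1 : ℤ)⟧)) hQ
  -- show g = 0
  have hg : g = 0 := by
    have e₂ : X⟦(-1 : ℤ)⟧ ≅ X⟦(-b)⟧⟦(-1 : ℤ)⟧⟦b⟧ :=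
      ((shiftFunctorCompIsoId C (-b) b (neg_add_cancel b)).app (X⟦(-1 : ℤ)⟧)).symm ≪≫
        (shiftFunctor C b).mapIso (shiftComm X (-1) (-b))
    have h0 : e₂.hom ≫ (shiftFunctor C b).map ((shiftFunctor C (-1 : ℤ)).map g) = 0 :=
      h _ hY₀ (-1) (by omega) _
    have h1 : (shiftFunctor C b).map ((shiftFunctor C (-1 : ℤ)).map g) =
        e₂.inv ≫ (e₂.hom ≫ (shiftFunctor C b).map ((shiftFunctor C (-1 : ℤ)).map g)) := by simp
    rw [h0, comp_zero] at h1
    exact shift_map_zero (-1) (shift_map_zero b h1)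
  obtain ⟨s, hs⟩ := Triangle.coyoneda_exact₂ _ hT (𝟙 (X⟦(-b)⟧))
    (by rw [Triangle.mk_mor₂, hg]; exact comp_zero)
  exact W.coconn_retract s f hs.symm hK

/-- The converse: vanishing of all maps from `C_{[-∞,a]}` forces membership in `C_{[a,∞]}`. -/
lemma memGE_of (W : WeightStructure C) (a : ℤ) (X : C)
    (h : ∀ Y : C, W.memLE a Y → ∀ i : ℤ, i < 0 → ∀ f : Y⟦i⟧ ⟶ X, f = 0) :
    W.memGE a X := by
  obtain ⟨K, Q, f, g, h3, hT, hK, hQ⟩ := W.exists_decomp (X⟦(-a)⟧⟦(1 : ℤ)⟧)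
  have hY₀ : W.memLE a (K⟦a⟧) :=
    W.coconn_of_iso ((shiftFunctorCompIsoId C a (-a) (add_neg_cancel a)).app K) hK
  -- show f = 0
  have hf : f = 0 := by
    have e₃ : X⟦(-a)⟧⟦(1 : ℤ)⟧⟦a⟧⟦(-1 : ℤ)⟧ ≅ X :=
      (shiftFunctor C (-1 : ℤ)).mapIso (shiftComm (X⟦(-a)⟧) 1 a) ≪≫
        (shiftFunctor C (-1 : ℤ)).mapIso ((shiftFunctor C (1 : ℤ)).mapIso
          ((shiftFunctorCompIsoId C (-a) a (neg_add_cancel a)).app X)) ≪≫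
        (shiftFunctorCompIsoId C 1 (-1) (add_neg_cancel 1)).app X
    have h0 : (shiftFunctor C (-1 : ℤ)).map ((shiftFunctor C a).map f) ≫ e₃.hom = 0 :=
      h _ hY₀ (-1) (by omega) _
    have h1 : (shiftFunctor C (-1 : ℤ)).map ((shiftFunctor C a).map f) =
        ((shiftFunctor C (-1 : ℤ)).map ((shiftFunctor C a).map f) ≫ e₃.hom) ≫ e₃.inv := by simp
    rw [h0, zero_comp] at h1
    exact shift_map_zero a (shift_map_zero (-1) h1)
  -- split the shifted triangle
  have hT' := Triangle.shift_distinguished _ hT (-1)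
  obtain ⟨r, hr⟩ := Triangle.yoneda_exact₂ _ hT'
    (𝟙 (((CategoryTheory.shiftFunctor (Triangle C) (-1 : ℤ)).obj (Triangle.mk f g h3)).obj₂))
    (by
      have : ((CategoryTheory.shiftFunctor (Triangle C) (-1 : ℤ)).obj
          (Triangle.mk f g h3)).mor₁ = 0 := by
        dsimp
        rw [hf]
        show ((-1 : ℤ).negOnePow • (shiftFunctor C (-1 : ℤ)).map (0 : K ⟶ X⟦(-a)⟧⟦(1 : ℤ)⟧)) = 0
        rw [Functor.map_zero, smul_zero]
      rw [this, zero_comp])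
  have hconn : W.conn (X⟦(-a)⟧⟦(1 : ℤ)⟧⟦(-1 : ℤ)⟧) := by
    exact W.conn_retract _ r hr.symm hQ
  exact W.conn_of_iso
    (((shiftFunctorCompIsoId C 1 (-1) (add_neg_cancel 1)).app (X⟦(-a)⟧)).symm) hconn

/-- Joint epi-ness of shifted biproduct injections. -/
lemma shift_biprod_hom_ext {X Y V : C} (i : ℤ) (c : (X ⊞ Y)⟦i⟧ ⟶ V)
    (h1 : (biprod.inl : X ⟶ X ⊞ Y)⟦i⟧' ≫ c = 0)
    (h2 : (biprod.inr : Y ⟶ X ⊞ Y)⟦i⟧' ≫ c = 0) : c = 0 := by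
  have htot : (𝟙 ((X ⊞ Y)⟦i⟧)) =
      (biprod.fst : X ⊞ Y ⟶ X)⟦i⟧' ≫ (biprod.inl : X ⟶ X ⊞ Y)⟦i⟧' +
      (biprod.snd : X ⊞ Y ⟶ Y)⟦i⟧' ≫ (biprod.inr : Y ⟶ X ⊞ Y)⟦i⟧' := by
    rw [← Functor.map_comp, ← Functor.map_comp, ← Functor.map_add, biprod.total,
      CategoryTheory.Functor.map_id]
  calc c = 𝟙 _ ≫ c := by rw [Category.id_comp]
    _ = (biprod.fst : X ⊞ Y ⟶ X)⟦i⟧' ≫ ((biprod.inl : X ⟶ X ⊞ Y)⟦i⟧' ≫ c) +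
        (biprod.snd : X ⊞ Y ⟶ Y)⟦i⟧' ≫ ((biprod.inr : Y ⟶ X ⊞ Y)⟦i⟧' ≫ c) := by
          rw [htot, Preadditive.add_comp, Category.assoc, Category.assoc]
    _ = 0 := by rw [h1, h2, comp_zero, comp_zero, add_zero]

end WeightStructure

end Helpers

/-- `C_{[-∞,b]}` consists exactly of the `X` with `hom_C(X,Y)` connective for all
`Y ∈ C_{[b,∞]}`; dually `C_{[a,∞]}` consists exactly of the `X` with `hom_C(Y,X)` connective
for all `Y ∈ C_{[-∞,a]}`.  In particular `C_{[a,∞]}` is closed under pushouts, `C_{[-∞,b]}`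
under pullbacks, and all `C_{[a,b]}` are closed under extensions. -/
theorem stmt2 (W : WeightStructure C) :
    (∀ (b : ℤ) (X : C), W.memLE b X ↔
      ∀ Y : C, W.memGE b Y → ∀ i : ℤ, i < 0 → ∀ f : X⟦i⟧ ⟶ Y, f = 0) ∧
    (∀ (a : ℤ) (X : C), W.memGE a X ↔
      ∀ Y : C, W.memLE a Y → ∀ i : ℤ, i < 0 → ∀ f : Y⟦i⟧ ⟶ X, f = 0) ∧
    (∀ (a : ℤ) {P X Y Z : C} (f : Z ⟶ X) (g : Z ⟶ Y) (inl : X ⟶ P) (inr : Y ⟶ P),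
      IsPushout f g inl inr → W.memGE a X → W.memGE a Y → W.memGE a Z → W.memGE a P) ∧
    (∀ (b : ℤ) {P X Y Z : C} (fst : P ⟶ X) (snd : P ⟶ Y) (f : X ⟶ Z) (g : Y ⟶ Z),
      IsPullback fst snd f g → W.memLE b X → W.memLE b Y → W.memLE b Z → W.memLE b P) ∧
    (∀ (a b : ℤ) (T : Triangle C), T ∈ (distTriang C) →
      (W.memGE a T.obj₁ ∧ W.memLE b T.obj₁) → (W.memGE a T.obj₃ ∧ W.memLE b T.obj₃) →
      (W.memGE a T.obj₂ ∧ W.memLE b T.obj₂)) := by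
  refine ⟨fun b X => ⟨fun hX Y hY i hi f => W.vanish₀ hX hY hi f, W.memLE_of b X⟩,
    fun a X => ⟨fun hX Y hY i hi f => W.vanish₀ hY hX hi f, W.memGE_of a X⟩, ?_, ?_, ?_⟩
  · -- pushouts
    intro a P X Y Z f g inl inr hpo hX hY hZ
    obtain ⟨Q, π, δ, hT⟩ := distinguished_cocone_triangle (biprod.lift f (-g))
    have h0 : biprod.lift f (-g) ≫ π = 0 := comp_distTriang_mor_zero₁₂ _ hT
    have hcomm : f ≫ (biprod.inl ≫ π) = g ≫ (biprod.inr ≫ π) := by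
      rw [biprod.lift_eq] at h0
      simp only [Preadditive.add_comp, Preadditive.neg_comp, Category.assoc] at h0
      exact add_neg_eq_zero.mp h0
    set u : P ⟶ Q := hpo.desc (biprod.inl ≫ π) (biprod.inr ≫ π) hcomm with hu
    have hψ : biprod.lift f (-g) ≫ biprod.desc inl inr = 0 := by
      rw [biprod.lift_desc, hpo.w]
      simp
    obtain ⟨v, hv⟩ : ∃ v : Q ⟶ P, biprod.desc inl inr = π ≫ v := Triangle.yoneda_exact₂ _ hT (biprod.desc inl inr) hψ
    have huv : u ≫ v = 𝟙 P := by
      apply hpo.hom_ext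
      · rw [← Category.assoc, hpo.inl_desc, Category.assoc, ← hv]
        simp
      · rw [← Category.assoc, hpo.inr_desc, Category.assoc, ← hv]
        simp
    apply W.memGE_of
    intro Y' hY' i hi α
    have hαu : α ≫ u = 0 := by
      have h1 : (α ≫ u) ≫ δ = 0 := W.vanish₂ hY' hZ (by omega) _
      obtain ⟨β, hβ⟩ : ∃ β : Y'⟦i⟧ ⟶ X ⊞ Y, α ≫ u = β ≫ π := Triangle.coyoneda_exact₃ _ hT (α ≫ u) h1
      have hβ0 : β = 0 := by
        apply biprod.hom_ext
        · rw [Limits.zero_comp]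
          exact W.vanish₀ hY' hX hi _
        · rw [Limits.zero_comp]
          exact W.vanish₀ hY' hY hi _
      rw [hβ, hβ0, Limits.zero_comp]
    calc α = α ≫ (u ≫ v) := by rw [huv, Category.comp_id]
      _ = (α ≫ u) ≫ v := by rw [Category.assoc]
      _ = 0 := by rw [hαu, Limits.zero_comp]
  · -- pullbacks
    intro b P X Y Z fst snd f g hpb hX hY hZ
    obtain ⟨F, ι, δ, hT⟩ := distinguished_cocone_triangle₁ (biprod.desc f (-g))
    have h0 : ι ≫ biprod.desc f (-g) = 0 := comp_distTriang_mor_zero₁₂ _ hT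
    have hcomm : (ι ≫ biprod.fst) ≫ f = (ι ≫ biprod.snd) ≫ g := by
      rw [biprod.desc_eq] at h0
      simp only [Preadditive.comp_add, Preadditive.comp_neg, ← Category.assoc] at h0
      exact add_neg_eq_zero.mp h0
    set v : F ⟶ P := hpb.lift (ι ≫ biprod.fst) (ι ≫ biprod.snd) hcomm with hv
    have hψ : biprod.lift fst snd ≫ biprod.desc f (-g) = 0 := by
      rw [biprod.lift_desc, hpb.w]
      simp
    obtain ⟨u, hu⟩ : ∃ u : P ⟶ F, biprod.lift fst snd = u ≫ ι := Triangle.coyoneda_exact₂ _ hT (biprod.lift fst snd) hψ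
    have huv : u ≫ v = 𝟙 P := by
      apply hpb.hom_ext
      · rw [Category.assoc, hpb.lift_fst, ← Category.assoc, ← hu]
        simp
      · rw [Category.assoc, hpb.lift_snd, ← Category.assoc, ← hu]
        simp
    apply W.memLE_of
    intro Y' hY' i hi α
    have hvα : (shiftFunctor C i).map v ≫ α = 0 := by
      set T' := (CategoryTheory.shiftFunctor (Triangle C) i).obj (Triangle.mk ι (biprod.desc f (-g)) δ)
        with hT'def
      have hT' := Triangle.shift_distinguished _ hT i
      have hT'' := inv_rot_of_distTriang _ hT'
      have h1 : T'.invRotate.mor₁ ≫ ((shiftFunctor C i).map v ≫ α) = 0 :=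
        W.vanish' hZ hY' (show i + (-1 : ℤ) < 0 by omega) _
      obtain ⟨γ, hγ⟩ := Triangle.yoneda_exact₂ _ hT'' ((shiftFunctor C i).map v ≫ α) h1
      have hγ0 : γ = 0 := by
        apply WeightStructure.shift_biprod_hom_ext
        · exact W.vanish₀ hX hY' hi _
        · exact W.vanish₀ hY hY' hi _
      subst hγ0; exact hγ.trans Limits.comp_zero
    calc α = (shiftFunctor C i).map (u ≫ v) ≫ α := by
          rw [huv, CategoryTheory.Functor.map_id, Category.id_comp]
      _ = (shiftFunctor C i).map u ≫ ((shiftFunctor C i).map v ≫ α) := by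
          rw [Functor.map_comp, Category.assoc]
      _ = 0 := by rw [hvα, Limits.comp_zero]
  · -- extensions
    intro a b T hT h₁ h₃
    constructor
    · apply W.memGE_of
      intro Y' hY' i hi α
      have h0 : α ≫ T.mor₂ = 0 := W.vanish₀ hY' h₃.1 hi _
      obtain ⟨β, hβ⟩ := Triangle.coyoneda_exact₂ _ hT α h0
      rw [hβ, W.vanish₀ hY' h₁.1 hi β, Limits.zero_comp]
    · apply W.memLE_of
      intro Y' hY' i hi α
      have hT' := Triangle.shift_distinguished _ hT i
      have h0 : ((CategoryTheory.shiftFunctor (Triangle C) i).obj T).mor₁ ≫ α = 0 := by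
        have : (shiftFunctor C i).map T.mor₁ ≫ α = 0 := W.vanish₀ h₁.2 hY' hi _
        dsimp
        show (i.negOnePow • (shiftFunctor C i).map T.mor₁) ≫ α = 0
        rw [Linear.units_smul_comp, this, smul_zero]
      obtain ⟨γ, hγ⟩ := Triangle.yoneda_exact₂ _ hT' α h0
      rw [hγ, W.vanish₀ h₃.2 hY' hi γ]; exact Limits.comp_zero
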